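/- Let {C_0, C_1, ..., C_d} be a d-critical family in R^d and let D be a bounded connected component of R^d \ (C_0 ∪ ... ∪ C_d). Then D is contained in the convex hull of any points a_0, ..., a_d where a_j ∈ ∩_{i≠j} C_i for each j. -/

import Mathlib

/-- Sum of two elements of the cone of directions from `y` into a convex set `S`
is again in the cone. -/
private lemma cone_add' {E : Type*} [AddCommGroup E] [Module ℝ E]
    {S : Set E} (hS : Convex ℝ S) (y : E) {v w : E}
    (hv : ∃ s : ℝ, 0 < s ∧ ∃ c ∈ S, v = s • (c - y))
    (hw : ∃ s : ℝ, 0 < s ∧ ∃ c ∈ S, w = s • (c - y)) :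
    ∃ s : ℝ, 0 < s ∧ ∃ c ∈ S, v + w = s • (c - y) := by
  obtain ⟨s, hs, c, hc, rfl⟩ := hv
  obtain ⟨t, ht, e, he, rfl⟩ := hw
  have hst : (0:ℝ) < s + t := by linarith
  refine ⟨s + t, hst, (s/(s+t)) • c + (t/(s+t)) • e,
    hS hc he (by positivity) (by positivity) (by field_simp), ?_⟩
  match_scalars <;> (field_simp; try ring)

/-- A positive combination (sum over a nonempty finset) of elements of the
cone of directions from `y` into a convex set `S` is again in the cone. -/
private lemma cone_sum' {E : Type*} [AddCommGroup E] [Module ℝ E]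
    {S : Set E} (hS : Convex ℝ S) (y : E) {ι : Type*} {t : Finset ι}
    (ht : t.Nonempty) {u : ι → E}
    (h : ∀ j ∈ t, ∃ s : ℝ, 0 < s ∧ ∃ c ∈ S, u j = s • (c - y)) :
    ∃ s : ℝ, 0 < s ∧ ∃ c ∈ S, (∑ j ∈ t, u j) = s • (c - y) := by
  induction ht using Finset.Nonempty.cons_induction with
  | singleton a => simpa using h a (by simp)
  | cons a s ha hs ih =>
      rw [Finset.sum_cons]
      exact cone_add' hS y (h a (by simp)) (ih fun j hj => h j (by simp [hj]))

/-- The hollow enclosed by a d-critical family is contained in the convex hull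
of any choice of points a_j ∈ ∩_{i≠j} C_i. -/
theorem hollow_subset_hull (d : ℕ)
    (C : Fin (d + 1) → Set (EuclideanSpace ℝ (Fin d)))
    (hcomp : ∀ i, IsCompact (C i)) (hconv : ∀ i, Convex ℝ (C i))
    (hcrit : ∀ j, (⋂ i ∈ {i : Fin (d + 1) | i ≠ j}, C i).Nonempty)
    (hempty : (⋂ i, C i) = ∅)
    (x : EuclideanSpace ℝ (Fin d)) (hx : x ∈ (⋃ i, C i)ᶜ)
    (D : Set (EuclideanSpace ℝ (Fin d)))
    (hD : D = connectedComponentIn (⋃ i, C i)ᶜ x)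
    (hbd : Bornology.IsBounded D)
    (a : Fin (d + 1) → EuclideanSpace ℝ (Fin d))
    (ha : ∀ j, a j ∈ ⋂ i ∈ {i : Fin (d + 1) | i ≠ j}, C i) :
    D ⊆ convexHull ℝ (Set.range a) := by
  intro y hy
  have hyD : y ∈ connectedComponentIn (⋃ i, C i)ᶜ x := hD ▸ hy
  have hyU : y ∉ ⋃ i, C i := connectedComponentIn_subset _ _ hyD
  have hyCi : ∀ i, y ∉ C i := fun i hi => hyU (Set.mem_iUnion.mpr ⟨i, hi⟩)
  have haC : ∀ i j : Fin (d+1), i ≠ j → a j ∈ C i := by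
    intro i j hij
    have h := ha j
    simp only [Set.mem_iInter, Set.mem_setOf_eq] at h
    exact h i hij
  -- Every nonzero direction from y hits some C i (else the component is unbounded)
  have cover : ∀ v : EuclideanSpace ℝ (Fin d), v ≠ 0 →
      ∃ i, ∃ s : ℝ, 0 < s ∧ ∃ c ∈ C i, v = s • (c - y) := by
    intro v hv
    by_contra hcon
    push_neg at hcon
    have hRsub : ((fun t : ℝ => y + t • v) '' Set.Ici 0) ⊆ (⋃ i, C i)ᶜ := by
      rintro z ⟨t, ht, rfl⟩ hzmem
      obtain ⟨i, hi⟩ := Set.mem_iUnion.mp hzmem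
      rcases eq_or_lt_of_le (Set.mem_Ici.mp ht) with h0 | h0
      · exact hyCi i (by simpa [← h0] using hi)
      · exact hcon i t⁻¹ (by positivity) _ hi (by
          rw [add_sub_cancel_left, smul_smul, inv_mul_cancel₀ (ne_of_gt h0), one_smul])
    have hyR : y ∈ ((fun t : ℝ => y + t • v) '' Set.Ici 0) :=
      ⟨0, Set.mem_Ici.mpr le_rfl, by simp⟩
    have hconn : IsPreconnected ((fun t : ℝ => y + t • v) '' Set.Ici 0) :=
      isPreconnected_Ici.image _ (Continuous.continuousOn (by continuity))
    have hRD : ((fun t : ℝ => y + t • v) '' Set.Ici 0) ⊆ D := by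
      rw [hD, connectedComponentIn_eq hyD]
      exact hconn.subset_connectedComponentIn hyR hRsub
    obtain ⟨M, hM⟩ := isBounded_iff_forall_norm_le.mp (hbd.subset hRD)
    have hvn : 0 < ‖v‖ := norm_pos_iff.mpr hv
    have hM0 : 0 ≤ M := le_trans (norm_nonneg y) (hM y hyR)
    set t := (M + ‖y‖ + 1) / ‖v‖ with htdef
    have ht : 0 ≤ t := by positivity
    have h1 := hM (y + t • v) ⟨t, ht, rfl⟩
    have h2 : ‖t • v‖ ≤ ‖y + t • v‖ + ‖y‖ := by
      calc ‖t • v‖ = ‖(y + t • v) - y‖ := by rw [add_sub_cancel_left]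
        _ ≤ ‖y + t • v‖ + ‖y‖ := norm_sub_le _ _
    have h3 : ‖t • v‖ = t * ‖v‖ := by rw [norm_smul, Real.norm_of_nonneg ht]
    have h4 : t * ‖v‖ = M + ‖y‖ + 1 := by
      rw [htdef]; field_simp
    linarith
  -- the d+1 vectors a j - y are linearly dependent
  have hdep : ¬ LinearIndependent ℝ (fun j : Fin (d+1) => a j - y) := by
    intro hli
    have h := hli.fintype_card_le_finrank
    rw [finrank_euclideanSpace_fin, Fintype.card_fin] at h
    omega
  obtain ⟨μ, hμsum, i₀, hi₀⟩ := Fintype.not_linearIndependent_iff.mp hdep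
  -- produce nonnegative weights with positive sum and zero combination
  obtain ⟨W, hWnn, hWpos, hWzero⟩ :
      ∃ W : Fin (d+1) → ℝ, (∀ j, 0 ≤ W j) ∧ 0 < ∑ j, W j ∧
        ∑ j, W j • (a j - y) = 0 := by
    by_cases hneg : ∃ k, μ k < 0
    · by_cases hpos : ∃ k, 0 < μ k
      · -- mixed signs
        obtain ⟨kp, hkp⟩ := hpos
        obtain ⟨kn, hkn⟩ := hneg
        set ν : Fin (d+1) → ℝ := fun j => max (μ j) 0 with hν
        set ν' : Fin (d+1) → ℝ := fun j => max (-μ j) 0 with hν'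
        have hid : ∀ j, ν j - ν' j = μ j := by
          intro j
          rcases le_or_gt (μ j) 0 with h | h
          · simp [hν, hν', max_eq_right h, max_eq_left (neg_nonneg.mpr h)]
          · simp [hν, hν', max_eq_left h.le, max_eq_right (neg_nonpos.mpr h.le)]
        have hposν : ∀ j, 0 < ν j ↔ 0 < μ j := by
          intro j; simp [hν, lt_max_iff]
        have hposν' : ∀ j, 0 < ν' j ↔ μ j < 0 := by
          intro j; simp [hν', lt_max_iff]
        have hsum : ∑ j, ν j • (a j - y) = ∑ j, ν' j • (a j - y) := by
          have h0 : ∑ j, (ν j • (a j - y) - ν' j • (a j - y)) = 0 := by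
            have heq : ∀ j : Fin (d+1),
                ν j • (a j - y) - ν' j • (a j - y) = μ j • (a j - y) := by
              intro j; rw [← sub_smul, hid]
            rw [Finset.sum_congr rfl (fun j _ => heq j)]; exact hμsum
          rw [Finset.sum_sub_distrib] at h0
          exact sub_eq_zero.mp h0
        by_cases hw : ∑ j, ν j • (a j - y) = 0
        · refine ⟨ν, fun j => le_max_right _ _, ?_, hw⟩
          apply Finset.sum_pos' (fun j _ => le_max_right _ _)
          exact ⟨kp, Finset.mem_univ _, (hposν kp).mpr hkp⟩
        · exfalso
          have hwV : ∀ k, ∃ s : ℝ, 0 < s ∧ ∃ c ∈ C k,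
              (∑ j, ν j • (a j - y)) = s • (c - y) := by
            intro k
            rcases le_or_gt (μ k) 0 with hk | hk
            · have hrepr : ∑ j ∈ Finset.univ.filter (fun j => 0 < ν j),
                  ν j • (a j - y) = ∑ j, ν j • (a j - y) :=
                Finset.sum_filter_of_ne (fun j _ hne => by
                  rcases (le_max_right (μ j) 0).lt_or_eq with h | h
                  · exact h
                  · have h0 : ν j = 0 := by rw [hν]; exact h.symm
                    exact absurd (by rw [h0, zero_smul]) hne)
              rw [← hrepr]
              refine cone_sum' (hconv k) y
                ⟨kp, Finset.mem_filter.mpr ⟨Finset.mem_univ _, (hposν kp).mpr hkp⟩⟩ ?_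
              intro j hj
              obtain ⟨-, hj⟩ := Finset.mem_filter.mp hj
              have hjk : k ≠ j := by
                intro h; subst h; exact absurd ((hposν k).mp hj) (not_lt.mpr hk)
              exact ⟨ν j, hj, a j, haC k j hjk, rfl⟩
            · rw [hsum]
              have hrepr : ∑ j ∈ Finset.univ.filter (fun j => 0 < ν' j),
                  ν' j • (a j - y) = ∑ j, ν' j • (a j - y) :=
                Finset.sum_filter_of_ne (fun j _ hne => by
                  rcases (le_max_right (-μ j) 0).lt_or_eq with h | h
                  · exact h
                  · have h0 : ν' j = 0 := by rw [hν']; exact h.symm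
                    exact absurd (by rw [h0, zero_smul]) hne)
              rw [← hrepr]
              refine cone_sum' (hconv k) y
                ⟨kn, Finset.mem_filter.mpr ⟨Finset.mem_univ _, (hposν' kn).mpr hkn⟩⟩ ?_
              intro j hj
              obtain ⟨-, hj⟩ := Finset.mem_filter.mp hj
              have hjk : k ≠ j := by
                intro h; subst h
                exact absurd ((hposν' k).mp hj) (not_lt.mpr hk.le)
              exact ⟨ν' j, hj, a j, haC k j hjk, rfl⟩
          obtain ⟨k₀, hk₀⟩ := cover (-(∑ j, ν j • (a j - y))) (neg_ne_zero.mpr hw)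
          obtain ⟨s, hs, c, hc, hcsum⟩ := cone_add' (hconv k₀) y (hwV k₀) hk₀
          rw [add_neg_cancel] at hcsum
          have hcy : c - y = 0 := by
            rcases smul_eq_zero.mp hcsum.symm with h | h
            · exact absurd h (ne_of_gt hs)
            · exact h
          rw [sub_eq_zero] at hcy
          exact hyCi k₀ (hcy ▸ hc)
      · -- all μ ≤ 0 : use -μ
        push_neg at hpos
        refine ⟨fun j => -μ j, fun j => neg_nonneg.mpr (hpos j), ?_, ?_⟩
        · apply Finset.sum_pos' (fun j _ => neg_nonneg.mpr (hpos j))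
          obtain ⟨kn, hkn⟩ := hneg
          exact ⟨kn, Finset.mem_univ _, by simpa using hkn⟩
        · have : ∀ j : Fin (d+1), -μ j • (a j - y) = -(μ j • (a j - y)) := by
            intro j; rw [neg_smul]
          rw [Finset.sum_congr rfl (fun j _ => this j), Finset.sum_neg_distrib,
            hμsum, neg_zero]
    · -- all μ ≥ 0 : use μ
      push_neg at hneg
      refine ⟨μ, fun j => hneg j, ?_, hμsum⟩
      apply Finset.sum_pos' (fun j _ => hneg j)
      exact ⟨i₀, Finset.mem_univ _, lt_of_le_of_ne (hneg i₀) (Ne.symm hi₀)⟩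
  -- conclude: y is the center of mass of the a j with weights W
  have hsum_a : ∑ j, W j • a j = (∑ j, W j) • y := by
    have h1 : ∀ j : Fin (d+1), W j • a j = W j • (a j - y) + W j • y := by
      intro j; rw [← smul_add]; congr 1; abel
    rw [Finset.sum_congr rfl (fun j _ => h1 j), Finset.sum_add_distrib, hWzero,
      zero_add, ← Finset.sum_smul]
  have hcm : Finset.univ.centerMass W a = y := by
    rw [Finset.centerMass, hsum_a, smul_smul, inv_mul_cancel₀ (ne_of_gt hWpos), one_smul]
  rw [← hcm]
  exact Finset.centerMass_mem_convexHull _ (fun i _ => hWnn i) hWpos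
    (fun i _ => Set.mem_range_self i)
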